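/- Let (x,f) be a feasible solution to LP-BB on a graph with m ≥ 2 edges. Then there exists a feasible solution (x',f') to LP-BB such that (i) for every edge e, either x'_e = 0 or x'_e ≥ 1/m², (ii) f'_p = 0 for every path p that uses an edge e with x'_e = 0, and (iii) the cost of (x',f') is at most (1 + 1/(m−1)) times the cost of (x,f). -/

import Mathlib

/-- Let `(x, f)` be a feasible solution to LP-BB on a graph with `m ≥ 2`
edges.  Then there exists a feasible solution `(x', f')` to LP-BB such that
(i) every edge `e` has `x' e = 0` or `x' e ≥ 1/m²`,
(ii) `f' p = 0` for every path `p` using an edge `e` with `x' e = 0`, and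
(iii) the cost of `(x', f')` is at most `(1 + 1/(m-1))` times the cost of `(x, f)`. -/
theorem lp_bb_rounding_small_values
    {V : Type*} [Fintype V] [DecidableEq V] (G : SimpleGraph V) [DecidableRel G.Adj]
    (r : ℕ) (s t : Fin r → V)
    (c ℓ : Sym2 V → ℝ) (δ : Fin r → ℝ)
    (hc : ∀ e, 0 ≤ c e) (hℓ : ∀ e, 0 ≤ ℓ e) (hδ : ∀ i, 0 ≤ δ i)
    (m : ℕ) (hm : m = G.edgeFinset.card) (hm2 : 2 ≤ m)
    (x : Sym2 V → ℝ) (f : ∀ i : Fin r, G.Path (s i) (t i) → ℝ)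
    (hx : ∀ e, 0 ≤ x e) (hf : ∀ i p, 0 ≤ f i p)
    (hflow : ∀ i, ∑ p : G.Path (s i) (t i), f i p = 1)
    (hcap : ∀ i : Fin r, ∀ e ∈ G.edgeFinset,
      ∑ p : G.Path (s i) (t i), (if e ∈ p.1.edges then f i p else 0) ≤ x e) :
    ∃ (x' : Sym2 V → ℝ) (f' : ∀ i : Fin r, G.Path (s i) (t i) → ℝ),
      (∀ e, 0 ≤ x' e) ∧ (∀ i p, 0 ≤ f' i p) ∧
      (∀ i, ∑ p : G.Path (s i) (t i), f' i p = 1) ∧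
      (∀ i : Fin r, ∀ e ∈ G.edgeFinset,
        ∑ p : G.Path (s i) (t i), (if e ∈ p.1.edges then f' i p else 0) ≤ x' e) ∧
      -- (i): each edge value is 0 or at least 1/m²
      (∀ e ∈ G.edgeFinset, x' e = 0 ∨ 1 / (m : ℝ) ^ 2 ≤ x' e) ∧
      -- (ii): paths through zeroed-out edges carry no flow
      (∀ i : Fin r, ∀ p : G.Path (s i) (t i),
        (∃ e ∈ p.1.edges, x' e = 0) → f' i p = 0) ∧
      -- (iii): cost increases by a factor of at most 1 + 1/(m-1)
      (∑ e ∈ G.edgeFinset, c e * x' e +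
          ∑ i, δ i * ∑ p : G.Path (s i) (t i), (p.1.edges.map ℓ).sum * f' i p
        ≤ (1 + 1 / ((m : ℝ) - 1)) *
          (∑ e ∈ G.edgeFinset, c e * x e +
            ∑ i, δ i * ∑ p : G.Path (s i) (t i), (p.1.edges.map ℓ).sum * f i p)) := by
  classical
  set M : ℝ := (m : ℝ) with hMdef
  have hM2 : (2 : ℝ) ≤ M := by rw [hMdef]; exact_mod_cast hm2
  have hM1 : (1 : ℝ) < M := by linarith
  have hMpos : (0 : ℝ) < M := by linarith
  have hM1pos : (0 : ℝ) < M - 1 := by linarith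
  set ε : ℝ := 1 / M ^ 2 with hεdef
  have hεpos : 0 < ε := by positivity
  set sc : ℝ := M / (M - 1) with hscdef
  have hsc1 : 1 ≤ sc := by rw [hscdef, le_div_iff₀ hM1pos]; linarith
  have hscpos : 0 < sc := lt_of_lt_of_le one_pos hsc1
  -- bad paths: those using an edge with small x-value
  set bad : ∀ i : Fin r, G.Path (s i) (t i) → Prop :=
    fun i p => ∃ e ∈ p.1.edges, x e < ε with hbaddef
  -- small edges
  set Small : Finset (Sym2 V) := G.edgeFinset.filter (fun e => x e < ε) with hSmalldef
  have hSmallcard : (Small.card : ℝ) ≤ M := by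
    have h1 : Small.card ≤ G.edgeFinset.card := Finset.card_filter_le _ _
    have h2 : Small.card ≤ m := hm ▸ h1
    rw [hMdef]; exact_mod_cast h2
  -- removed flow is at most 1/M per commodity
  have hR : ∀ i, (∑ p : G.Path (s i) (t i), if bad i p then f i p else 0) ≤ 1 / M := by
    intro i
    have h1 : (∑ p : G.Path (s i) (t i), if bad i p then f i p else 0)
        ≤ ∑ p : G.Path (s i) (t i), ∑ e ∈ Small, (if e ∈ p.1.edges then f i p else 0) := by
      apply Finset.sum_le_sum
      intro p _
      by_cases hb : bad i p
      · rw [if_pos hb]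
        obtain ⟨e0, he0p, he0s⟩ := hb
        have he0 : e0 ∈ Small := by
          refine Finset.mem_filter.mpr ⟨?_, he0s⟩
          rw [SimpleGraph.mem_edgeFinset]
          exact p.1.edges_subset_edgeSet he0p
        have hsingle := Finset.single_le_sum
          (f := fun e => if e ∈ p.1.edges then f i p else 0)
          (fun e _ => by by_cases h : e ∈ p.1.edges <;> simp [h, hf i p]) he0
        simpa [he0p] using hsingle
      · rw [if_neg hb]
        apply Finset.sum_nonneg
        intro e _
        by_cases h : e ∈ p.1.edges <;> simp [h, hf i p]
    have h2 : (∑ p : G.Path (s i) (t i), ∑ e ∈ Small, (if e ∈ p.1.edges then f i p else 0))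
        = ∑ e ∈ Small, ∑ p : G.Path (s i) (t i), (if e ∈ p.1.edges then f i p else 0) :=
      Finset.sum_comm
    have h3 : (∑ e ∈ Small, ∑ p : G.Path (s i) (t i), (if e ∈ p.1.edges then f i p else 0))
        ≤ ∑ e ∈ Small, x e := by
      apply Finset.sum_le_sum
      intro e he
      exact hcap i e (Finset.mem_filter.mp he).1
    have h4 : ∑ e ∈ Small, x e ≤ (Small.card : ℝ) * ε := by
      calc ∑ e ∈ Small, x e ≤ ∑ _e ∈ Small, ε := by
            apply Finset.sum_le_sum
            intro e he
            exact le_of_lt (Finset.mem_filter.mp he).2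
        _ = (Small.card : ℝ) * ε := by rw [Finset.sum_const, nsmul_eq_mul]
    have h5 : (Small.card : ℝ) * ε ≤ M * ε :=
      mul_le_mul_of_nonneg_right hSmallcard hεpos.le
    have h6 : M * ε = 1 / M := by
      rw [hεdef]; field_simp
    linarith
  -- surviving flow
  have hsplit : ∀ i, (∑ p : G.Path (s i) (t i), if bad i p then 0 else f i p)
      + (∑ p : G.Path (s i) (t i), if bad i p then f i p else 0) = 1 := by
    intro i
    rw [← Finset.sum_add_distrib, ← hflow i]
    apply Finset.sum_congr rfl
    intro p _
    by_cases hb : bad i p <;> simp [hb]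
  set S : Fin r → ℝ := fun i => ∑ p : G.Path (s i) (t i), if bad i p then 0 else f i p
    with hSdef
  have hSlb : ∀ i, (M - 1) / M ≤ S i := by
    intro i
    have h1 := hsplit i
    have h2 := hR i
    have h3 : (M - 1) / M = 1 - 1 / M := by field_simp
    have h4 : S i = 1 - (∑ p : G.Path (s i) (t i), if bad i p then f i p else 0) := by
      rw [hSdef]; linarith
    rw [h4, h3]; linarith
  have hSpos : ∀ i, 0 < S i := fun i => lt_of_lt_of_le (by positivity) (hSlb i)
  have hinv : ∀ i, 1 / S i ≤ sc := by
    intro i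
    have h1 : 0 < (M - 1) / M := by positivity
    have h2 := one_div_le_one_div_of_le h1 (hSlb i)
    rwa [one_div_div] at h2
  have hf'le : ∀ i p, (if bad i p then 0 else f i p / S i) ≤ sc * f i p := by
    intro i p
    by_cases hb : bad i p
    · rw [if_pos hb]; exact mul_nonneg hscpos.le (hf i p)
    · rw [if_neg hb, div_eq_mul_one_div]
      calc f i p * (1 / S i) ≤ f i p * sc :=
            mul_le_mul_of_nonneg_left (hinv i) (hf i p)
        _ = sc * f i p := mul_comm _ _
  refine ⟨fun e => if x e < ε then 0 else sc * x e,
    fun i p => if bad i p then 0 else f i p / S i, ?_, ?_, ?_, ?_, ?_, ?_, ?_⟩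
  · intro e
    beta_reduce
    by_cases h : x e < ε
    · rw [if_pos h]
    · rw [if_neg h]; exact mul_nonneg hscpos.le (hx e)
  · intro i p
    beta_reduce
    by_cases hb : bad i p
    · rw [if_pos hb]
    · rw [if_neg hb]
      exact div_nonneg (hf i p) (hSpos i).le
  · intro i
    beta_reduce
    have h1 : (∑ p : G.Path (s i) (t i), if bad i p then 0 else f i p / S i)
        = (∑ p : G.Path (s i) (t i), if bad i p then 0 else f i p) / S i := by
      rw [Finset.sum_div]
      apply Finset.sum_congr rfl
      intro p _
      by_cases hb : bad i p <;> simp [hb]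
    rw [h1]
    exact div_self (hSpos i).ne'
  · intro i e he
    beta_reduce
    by_cases hsmall : x e < ε
    · rw [if_pos hsmall]
      apply le_of_eq
      apply Finset.sum_eq_zero
      intro p _
      by_cases hep : e ∈ p.1.edges
      · have hb : bad i p := ⟨e, hep, hsmall⟩
        simp [hep, hb]
      · simp [hep]
    · rw [if_neg hsmall]
      calc (∑ p : G.Path (s i) (t i),
              if e ∈ p.1.edges then (if bad i p then 0 else f i p / S i) else 0)
          ≤ ∑ p : G.Path (s i) (t i), (if e ∈ p.1.edges then sc * f i p else 0) := by
            apply Finset.sum_le_sum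
            intro p _
            by_cases hep : e ∈ p.1.edges
            · rw [if_pos hep, if_pos hep]; exact hf'le i p
            · rw [if_neg hep, if_neg hep]
        _ = sc * ∑ p : G.Path (s i) (t i), (if e ∈ p.1.edges then f i p else 0) := by
            rw [Finset.mul_sum]
            apply Finset.sum_congr rfl
            intro p _
            by_cases hep : e ∈ p.1.edges <;> simp [hep]
        _ ≤ sc * x e := mul_le_mul_of_nonneg_left (hcap i e he) hscpos.le
  · intro e _
    beta_reduce
    by_cases h : x e < ε
    · left; rw [if_pos h]
    · right
      rw [if_neg h]
      push_neg at h
      calc ε ≤ x e := h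
        _ ≤ sc * x e := le_mul_of_one_le_left (hx e) hsc1
  · intro i p hp
    beta_reduce
    obtain ⟨e, hep, hxe⟩ := hp
    have hb : bad i p := by
      refine ⟨e, hep, ?_⟩
      by_contra hcon
      have hxe' : sc * x e = 0 := by
        have : (if x e < ε then 0 else sc * x e) = 0 := hxe
        rwa [if_neg hcon] at this
      push_neg at hcon
      rcases mul_eq_zero.mp hxe' with h' | h'
      · exact absurd h' hscpos.ne'
      · rw [h'] at hcon; linarith
    rw [if_pos hb]
  · beta_reduce
    have hedge : (∑ e ∈ G.edgeFinset, c e * (if x e < ε then 0 else sc * x e))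
        ≤ sc * ∑ e ∈ G.edgeFinset, c e * x e := by
      rw [Finset.mul_sum]
      apply Finset.sum_le_sum
      intro e _
      by_cases h : x e < ε
      · rw [if_pos h]
        have := mul_nonneg (hc e) (hx e)
        nlinarith
      · rw [if_neg h]
        apply le_of_eq; ring
    have hflowcost : ∀ i, (∑ p : G.Path (s i) (t i),
          (p.1.edges.map ℓ).sum * (if bad i p then 0 else f i p / S i))
        ≤ sc * ∑ p : G.Path (s i) (t i), (p.1.edges.map ℓ).sum * f i p := by
      intro i
      rw [Finset.mul_sum]
      apply Finset.sum_le_sum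
      intro p _
      have hlen : 0 ≤ (p.1.edges.map ℓ).sum := by
        apply List.sum_nonneg
        intro a ha
        obtain ⟨e, _, rfl⟩ := List.mem_map.mp ha
        exact hℓ e
      calc (p.1.edges.map ℓ).sum * (if bad i p then 0 else f i p / S i)
          ≤ (p.1.edges.map ℓ).sum * (sc * f i p) :=
            mul_le_mul_of_nonneg_left (hf'le i p) hlen
        _ = sc * ((p.1.edges.map ℓ).sum * f i p) := by ring
    have hflows : (∑ i, δ i * ∑ p : G.Path (s i) (t i),
          (p.1.edges.map ℓ).sum * (if bad i p then 0 else f i p / S i))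
        ≤ sc * ∑ i, δ i * ∑ p : G.Path (s i) (t i), (p.1.edges.map ℓ).sum * f i p := by
      rw [Finset.mul_sum]
      apply Finset.sum_le_sum
      intro i _
      calc δ i * ∑ p : G.Path (s i) (t i),
              (p.1.edges.map ℓ).sum * (if bad i p then 0 else f i p / S i)
          ≤ δ i * (sc * ∑ p : G.Path (s i) (t i), (p.1.edges.map ℓ).sum * f i p) :=
            mul_le_mul_of_nonneg_left (hflowcost i) (hδ i)
        _ = sc * (δ i * ∑ p : G.Path (s i) (t i), (p.1.edges.map ℓ).sum * f i p) := by ring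
    have hsceq : (1 : ℝ) + 1 / (M - 1) = sc := by
      rw [hscdef]; field_simp; ring
    rw [hsceq]
    calc (∑ e ∈ G.edgeFinset, c e * (if x e < ε then 0 else sc * x e))
          + ∑ i, δ i * ∑ p : G.Path (s i) (t i),
              (p.1.edges.map ℓ).sum * (if bad i p then 0 else f i p / S i)
        ≤ sc * (∑ e ∈ G.edgeFinset, c e * x e)
          + sc * ∑ i, δ i * ∑ p : G.Path (s i) (t i), (p.1.edges.map ℓ).sum * f i p :=
          add_le_add hedge hflows
      _ = sc * ((∑ e ∈ G.edgeFinset, c e * x e)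
          + ∑ i, δ i * ∑ p : G.Path (s i) (t i), (p.1.edges.map ℓ).sum * f i p) := by ring
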